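/- Suppose ℓ satisfies the Metric Loss Assumption, is bounded above by L > 0, satisfies min_{y ≠ y'} ℓ(y, y') > l for some l > 0, and W_{1,ℓ}(p_y, q_y) < δ for some δ > 0. Let f*_CC ∈ H be a measurable surjective classifier witnessing CC(κ), i.e., R_p(f*_CC) + max_{y ∈ Y} W_{1,ℓ}(f*_CC#p_{x|y}(·|y), f*_CC#q_{x|y}(·|y)) < κ, and assume the optimal couplings γ*_f ∈ Γ(f*_CC#p_x, f*_CC#q_x) and γ*_y ∈ Γ(p_y, q_y) attaining the corresponding 1-Wasserstein distances exist. Then the oracle upper bound U(f*_CC) := R_p(f*_CC) + W_{1,ℓ}(f*_CC#p_x, f*_CC#q_x) + E_y(f*_CC) satisfies U(f*_CC) ≤ 3·(κ + ((L + l)/l)·δ). -/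

import Mathlib

open MeasureTheory ProbabilityTheory

/-- A coupling of `μ` and `ν`: a joint measure on the product with the given marginals. -/
def IsCoupling {A B : Type*} [MeasurableSpace A] [MeasurableSpace B]
    (γ : Measure (A × B)) (μ : Measure A) (ν : Measure B) : Prop :=
  γ.map Prod.fst = μ ∧ γ.map Prod.snd = ν

/-- The `α`-Wasserstein distance between `μ` and `ν` with cost function `c`:
`W_{α,c}(μ,ν) = (inf_{γ ∈ Γ(μ,ν)} ∫ c^α dγ)^{1/α}`. -/
noncomputable def Wass {A B : Type*} [MeasurableSpace A] [MeasurableSpace B]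
    (α : ℝ) (c : A × B → ℝ) (μ : Measure A) (ν : Measure B) : ℝ :=
  sInf { r | ∃ γ : Measure (A × B), IsCoupling γ μ ν ∧ r = ∫ z, c z ^ α ∂γ } ^ (1 / α)

/-- The 1-Wasserstein distance between `μ` and `ν` with cost function `c`. -/
noncomputable def W1 {A B : Type*} [MeasurableSpace A] [MeasurableSpace B]
    (c : A × B → ℝ) (μ : Measure A) (ν : Measure B) : ℝ :=
  sInf { r | ∃ γ : Measure (A × B), IsCoupling γ μ ν ∧ r = ∫ z, c z ∂γ }

/-- The risk of classifier `f` under joint distribution `p`, w.r.t. loss `ℓ`. -/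
noncomputable def risk {X Y : Type*} [MeasurableSpace X] [MeasurableSpace Y]
    (ℓ : Y × Y → ℝ) (f : X → Y) (p : Measure (X × Y)) : ℝ :=
  ∫ z, ℓ (f z.1, z.2) ∂p

/-- `f#p` : pushforward of a joint measure `p` under `(x, y) ↦ (f x, y)`. -/
noncomputable def jmap {X Y : Type*} [MeasurableSpace X] [MeasurableSpace Y]
    (f : X → Y) (p : Measure (X × Y)) : Measure (Y × Y) :=
  p.map (fun z => (f z.1, z.2))

instance jmap.instIsFiniteMeasure {X Y : Type*} [MeasurableSpace X] [MeasurableSpace Y]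
    (f : X → Y) (p : Measure (X × Y)) [IsFiniteMeasure p] : IsFiniteMeasure (jmap f p) := by
  unfold jmap; infer_instance

section Helpers

variable {A B : Type*} [MeasurableSpace A] [MeasurableSpace B]

lemma IsCoupling.prob {γ : Measure (A × B)} {μ : Measure A} {ν : Measure B}
    (h : IsCoupling γ μ ν) [IsProbabilityMeasure μ] : IsProbabilityMeasure γ := by
  constructor
  have h1 : γ.map Prod.fst Set.univ = 1 := by rw [h.1]; exact measure_univ
  rwa [Measure.map_apply measurable_fst MeasurableSet.univ, Set.preimage_univ] at h1

lemma isCoupling_prod (μ : Measure A) (ν : Measure B) [IsProbabilityMeasure μ]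
    [IsProbabilityMeasure ν] : IsCoupling (μ.prod ν) μ ν := by
  constructor
  · rw [Measure.map_fst_prod]; simp
  · rw [Measure.map_snd_prod]; simp

lemma W1_nonneg {c : A × B → ℝ} (hc : ∀ z, 0 ≤ c z) (μ : Measure A) (ν : Measure B) :
    0 ≤ W1 c μ ν :=
  Real.sInf_nonneg fun _ ⟨_, _, hr⟩ => hr ▸ integral_nonneg hc

lemma W1_bddBelow {c : A × B → ℝ} (hc : ∀ z, 0 ≤ c z) (μ : Measure A) (ν : Measure B) :
    BddBelow { r | ∃ γ : Measure (A × B), IsCoupling γ μ ν ∧ r = ∫ z, c z ∂γ } :=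
  ⟨0, fun _ ⟨_, _, hr⟩ => hr ▸ integral_nonneg hc⟩

lemma W1_le {c : A × B → ℝ} (hc : ∀ z, 0 ≤ c z) {γ : Measure (A × B)} {μ : Measure A}
    {ν : Measure B} (hγ : IsCoupling γ μ ν) : W1 c μ ν ≤ ∫ z, c z ∂γ :=
  csInf_le (W1_bddBelow hc μ ν) ⟨γ, hγ, rfl⟩

lemma le_W1 {c : A × B → ℝ} {μ : Measure A} {ν : Measure B} [IsProbabilityMeasure μ]
    [IsProbabilityMeasure ν] {a : ℝ}
    (h : ∀ γ : Measure (A × B), IsCoupling γ μ ν → a ≤ ∫ z, c z ∂γ) :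
    a ≤ W1 c μ ν :=
  le_csInf ⟨_, μ.prod ν, isCoupling_prod μ ν, rfl⟩ fun _ ⟨γ, hγ, hr⟩ => hr ▸ h γ hγ

lemma exists_coupling_lt (c : A × B → ℝ) (μ : Measure A) (ν : Measure B) [IsProbabilityMeasure μ]
    [IsProbabilityMeasure ν] {ε : ℝ} (hε : 0 < ε) :
    ∃ γ : Measure (A × B), IsCoupling γ μ ν ∧ ∫ z, c z ∂γ < W1 c μ ν + ε := by
  obtain ⟨r, ⟨γ, hγ, hr⟩, hlt⟩ := Real.lt_sInf_add_pos
    (s := { r | ∃ γ : Measure (A × B), IsCoupling γ μ ν ∧ r = ∫ z, c z ∂γ })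
    ⟨_, μ.prod ν, isCoupling_prod μ ν, rfl⟩ hε
  exact ⟨γ, hγ, hr ▸ hlt⟩

lemma integrable_of_bdd {Z : Type*} [MeasurableSpace Z] {μ : Measure Z} [IsFiniteMeasure μ]
    {g : Z → ℝ} (hg : Measurable g) (C : ℝ) (h : ∀ z, ‖g z‖ ≤ C) : Integrable g μ :=
  ⟨hg.aestronglyMeasurable, HasFiniteIntegral.of_bounded (C := C) (Filter.Eventually.of_forall h)⟩

lemma integral_le_const {Z : Type*} [MeasurableSpace Z] {μ : Measure Z} [IsProbabilityMeasure μ]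
    {g : Z → ℝ} (hg : Integrable g μ) {C : ℝ} (h : ∀ z, g z ≤ C) : ∫ z, g z ∂μ ≤ C := by
  calc ∫ z, g z ∂μ ≤ ∫ _, C ∂μ := integral_mono hg (integrable_const C) h
  _ = C := by simp

lemma meas_set_eq_sum {Z : Type*} [Fintype Z] [MeasurableSpace Z] [MeasurableSingletonClass Z]
    (μ : Measure Z) (s : Set Z) [DecidablePred (· ∈ s)] :
    μ s = ∑ z ∈ Finset.univ.filter (· ∈ s), μ {z} := by
  have hs : s = ⋃ z ∈ Finset.univ.filter (· ∈ s), ({z} : Set Z) := by ext w; simp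
  conv_lhs => rw [hs]
  rw [measure_biUnion_finset ?_ fun _ _ => measurableSet_singleton _]
  intro x _ y _ hxy
  simp [Set.disjoint_singleton, hxy]

lemma meas_univ_eq_sum {Z : Type*} [Fintype Z] [MeasurableSpace Z] [MeasurableSingletonClass Z]
    (μ : Measure Z) : μ Set.univ = ∑ z, μ {z} := by
  classical
  rw [meas_set_eq_sum μ Set.univ]
  simp

lemma sum_toReal_eq_one {Z : Type*} [Fintype Z] [MeasurableSpace Z] [MeasurableSingletonClass Z]
    (μ : Measure Z) [IsProbabilityMeasure μ] : ∑ z, (μ {z}).toReal = 1 := by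
  rw [← ENNReal.toReal_sum fun a _ => measure_ne_top μ _, ← meas_univ_eq_sum, measure_univ,
    ENNReal.toReal_one]

lemma map_fst_singleton {Z W : Type*} [Fintype W] [MeasurableSpace Z] [MeasurableSpace W]
    [MeasurableSingletonClass Z] [MeasurableSingletonClass W]
    (γ : Measure (Z × W)) (a : Z) :
    γ.map Prod.fst {a} = ∑ b, γ {(a, b)} := by
  rw [Measure.map_apply measurable_fst (measurableSet_singleton a)]
  have hs : Prod.fst ⁻¹' ({a} : Set Z)
      = ⋃ b ∈ (Finset.univ : Finset W), ({(a, b)} : Set (Z × W)) := by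
    ext z
    simp [Prod.ext_iff, eq_comm]
  rw [hs, measure_biUnion_finset ?_ fun _ _ => measurableSet_singleton _]
  intro x _ y _ hxy
  simp [Set.disjoint_singleton, Prod.ext_iff, hxy]

lemma map_snd_singleton {Z W : Type*} [Fintype Z] [MeasurableSpace Z] [MeasurableSpace W]
    [MeasurableSingletonClass Z] [MeasurableSingletonClass W]
    (γ : Measure (Z × W)) (b : W) :
    γ.map Prod.snd {b} = ∑ a, γ {(a, b)} := by
  rw [Measure.map_apply measurable_snd (measurableSet_singleton b)]
  have hs : Prod.snd ⁻¹' ({b} : Set W)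
      = ⋃ a ∈ (Finset.univ : Finset Z), ({(a, b)} : Set (Z × W)) := by
    ext z
    simp [Prod.ext_iff, eq_comm]
  rw [hs, measure_biUnion_finset ?_ fun _ _ => measurableSet_singleton _]
  intro x _ y _ hxy
  simp [Set.disjoint_singleton, Prod.ext_iff, hxy]

lemma measure_ext_singleton {Z : Type*} [Fintype Z] [MeasurableSpace Z]
    [MeasurableSingletonClass Z] {μ ν : Measure Z} (h : ∀ z, μ {z} = ν {z}) : μ = ν := by
  classical
  ext s _
  rw [meas_set_eq_sum μ s, meas_set_eq_sum ν s]
  exact Finset.sum_congr rfl fun z _ => h z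

end Helpers

section Disint
variable {X Y : Type*} [MeasurableSpace X] [StandardBorelSpace X] [Nonempty X]
  [MeasurableSpace Y] [Fintype Y] [MeasurableSingletonClass Y]

omit [StandardBorelSpace X] [Nonempty X] [Fintype Y] [MeasurableSingletonClass Y] in
lemma swap_fst (p : Measure (X × Y)) [IsFiniteMeasure p] :
    (p.map Prod.swap).fst = p.map Prod.snd := by
  rw [Measure.fst, Measure.map_map measurable_fst measurable_swap]; rfl

lemma pushforward_singleton (p : Measure (X × Y)) [IsFiniteMeasure p]
    (f : X → Y) (hf : Measurable f) (yh : Y) :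
    p.map (fun z => f z.1) {yh}
      = ∑ a, (p.map Prod.snd) {a} * (((p.map Prod.swap).condKernel a).map f) {yh} := by
  have hmeas2 : Measurable (fun w : Y × X => f w.2) := hf.comp measurable_snd
  have h1 : p.map (fun z => f z.1) = (p.map Prod.swap).map (fun w => f w.2) := by
    rw [Measure.map_map hmeas2 measurable_swap]; rfl
  rw [h1, Measure.map_apply hmeas2 (measurableSet_singleton _)]
  conv_lhs => rw [← (p.map Prod.swap).disintegrate (p.map Prod.swap).condKernel]
  rw [Measure.compProd_apply (hmeas2 (measurableSet_singleton _))]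
  have h2 : ∀ a : Y, (Prod.mk a ⁻¹' ((fun w : Y × X => f w.2) ⁻¹' {yh})) = f ⁻¹' {yh} :=
    fun _ => rfl
  simp_rw [h2, swap_fst p]
  rw [lintegral_fintype]
  refine Finset.sum_congr rfl fun a _ => ?_
  rw [Measure.map_apply hf (measurableSet_singleton _), mul_comm]

/-- conditional expected loss given true label `a`. -/
noncomputable def rpost (ℓ : Y × Y → ℝ) (f : X → Y) (p : Measure (X × Y)) [IsFiniteMeasure p]
    (a : Y) : ℝ :=
  ∫ yh, ℓ (yh, a) ∂(((p.map Prod.swap).condKernel a).map f)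

lemma risk_eq_sum (p : Measure (X × Y)) [IsProbabilityMeasure p]
    (f : X → Y) (hf : Measurable f) (ℓ : Y × Y → ℝ) (hℓmeas : Measurable ℓ)
    (L : ℝ) (hL : ∀ z : Y × Y, ‖ℓ z‖ ≤ L) :
    risk ℓ f p = ∑ a, ((p.map Prod.snd) {a}).toReal * rpost ℓ f p a := by
  haveI : IsProbabilityMeasure (p.map Prod.swap) :=
    Measure.isProbabilityMeasure_map measurable_swap.aemeasurable
  haveI : IsProbabilityMeasure (p.map Prod.snd) :=
    Measure.isProbabilityMeasure_map measurable_snd.aemeasurable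
  have hg : Measurable (fun w : Y × X => ℓ (f w.2, w.1)) :=
    hℓmeas.comp ((hf.comp measurable_snd).prodMk measurable_fst)
  have e1 : risk ℓ f p = ∫ w, ℓ (f w.2, w.1) ∂(p.map Prod.swap) := by
    rw [integral_map measurable_swap.aemeasurable hg.aestronglyMeasurable]; rfl
  have hInt : Integrable (fun w : Y × X => ℓ (f w.2, w.1)) (p.map Prod.swap) :=
    integrable_of_bdd hg L fun z => hL _
  rw [e1, ← Measure.integral_condKernel (ρ := p.map Prod.swap) hInt, swap_fst p]
  rw [integral_fintype (Integrable.of_finite)]; simp only [measureReal_def]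
  refine Finset.sum_congr rfl fun a _ => ?_
  rw [smul_eq_mul]
  congr 1
  have hg2 : Measurable (fun yh : Y => ℓ (yh, a)) := measurable_of_countable _
  rw [rpost, integral_map hf.aemeasurable hg2.aestronglyMeasurable]

end Disint
theorem statement15 {X Y : Type*} [MeasurableSpace X] [StandardBorelSpace X] [Nonempty X]
    [MeasurableSpace Y] [Fintype Y] [MeasurableSingletonClass Y] [Nonempty Y]
    (ℓ : Y × Y → ℝ) (hℓmeas : Measurable ℓ)
    (hsymm : ∀ y y' : Y, ℓ (y, y') = ℓ (y', y))
    (hnonneg : ∀ y y' : Y, 0 ≤ ℓ (y, y'))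
    (htri : ∀ y₁ y₂ y₃ : Y, ℓ (y₁, y₃) ≤ ℓ (y₁, y₂) + ℓ (y₂, y₃))
    (hid : ∀ y y' : Y, ℓ (y, y') = 0 ↔ y = y')
    (L : ℝ) (hL : 0 < L) (hbound : ∀ y y' : Y, ℓ (y, y') ≤ L)
    (l : ℝ) (hl : 0 < l) (hlow : ∀ y y' : Y, y ≠ y' → l < ℓ (y, y'))
    (p q : Measure (X × Y)) [IsProbabilityMeasure p] [IsProbabilityMeasure q]
    (δ : ℝ) (hδ : 0 < δ) (hshift : W1 ℓ (p.map Prod.snd) (q.map Prod.snd) < δ)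
    (κ : ℝ) (hκ : 0 < κ)
    (f : X → Y) (hf : Measurable f) (hsurj : Function.Surjective f)
    (hCC : risk ℓ f p +
      (⨆ y : Y, W1 ℓ (((p.map Prod.swap).condKernel y).map f)
        (((q.map Prod.swap).condKernel y).map f)) < κ)
    (γf : Measure (Y × Y))
    (hγf : IsCoupling γf (p.map (fun z => f z.1)) (q.map (fun z => f z.1)))
    (hγfopt : ∫ z, ℓ z ∂γf = W1 ℓ (p.map (fun z => f z.1)) (q.map (fun z => f z.1)))
    (γy : Measure (Y × Y))
    (hγy : IsCoupling γy (p.map Prod.snd) (q.map Prod.snd))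
    (hγyopt : ∫ z, ℓ z ∂γy = W1 ℓ (p.map Prod.snd) (q.map Prod.snd)) :
    risk ℓ f p + W1 ℓ (p.map (fun z => f z.1)) (q.map (fun z => f z.1)) +
        (∫ z, W1 ℓ ((jmap f p).condKernel z.1) ((jmap f q).condKernel z.2) ∂γf) ≤
      3 * (κ + (L + l) / l * δ) := by
  classical
  have hnn : ∀ z : Y × Y, 0 ≤ ℓ z := fun z => hnonneg z.1 z.2
  have hnrm : ∀ z : Y × Y, ‖ℓ z‖ ≤ L := fun z => by
    rw [Real.norm_eq_abs, abs_of_nonneg (hnn z)]; exact hbound z.1 z.2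
  haveI : IsProbabilityMeasure (p.map Prod.snd) :=
    Measure.isProbabilityMeasure_map measurable_snd.aemeasurable
  haveI : IsProbabilityMeasure (q.map Prod.snd) :=
    Measure.isProbabilityMeasure_map measurable_snd.aemeasurable
  haveI : IsProbabilityMeasure (p.map (fun z : X × Y => f z.1)) :=
    Measure.isProbabilityMeasure_map (hf.comp measurable_fst).aemeasurable
  haveI : IsProbabilityMeasure (q.map (fun z : X × Y => f z.1)) :=
    Measure.isProbabilityMeasure_map (hf.comp measurable_fst).aemeasurable
  haveI : IsProbabilityMeasure (p.map Prod.swap) :=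
    Measure.isProbabilityMeasure_map measurable_swap.aemeasurable
  haveI : IsProbabilityMeasure (q.map Prod.swap) :=
    Measure.isProbabilityMeasure_map measurable_swap.aemeasurable
  haveI hγyP : IsProbabilityMeasure γy := hγy.prob
  haveI hγfP : IsProbabilityMeasure γf := hγf.prob
  haveI : IsProbabilityMeasure (jmap f p) := by
    unfold jmap
    exact Measure.isProbabilityMeasure_map ((hf.comp measurable_fst).prodMk measurable_snd).aemeasurable
  haveI : IsProbabilityMeasure (jmap f q) := by
    unfold jmap
    exact Measure.isProbabilityMeasure_map ((hf.comp measurable_fst).prodMk measurable_snd).aemeasurable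
  have hμmP : ∀ a : Y, IsProbabilityMeasure (((p.map Prod.swap).condKernel a).map f) :=
    fun _ => Measure.isProbabilityMeasure_map hf.aemeasurable
  have hνmP : ∀ a : Y, IsProbabilityMeasure (((q.map Prod.swap).condKernel a).map f) :=
    fun _ => Measure.isProbabilityMeasure_map hf.aemeasurable
  -- notation
  set S : ℝ := ⨆ y : Y, W1 ℓ (((p.map Prod.swap).condKernel y).map f)
      (((q.map Prod.swap).condKernel y).map f) with hSdef
  have hS0 : 0 ≤ S := Real.iSup_nonneg fun y => W1_nonneg hnn _ _
  have hjm : Measurable (fun z : X × Y => (f z.1, z.2)) := by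
    exact (hf.comp measurable_fst).prodMk measurable_snd
  have hleS : ∀ a : Y, W1 ℓ (((p.map Prod.swap).condKernel a).map f)
      (((q.map Prod.swap).condKernel a).map f) ≤ S := fun a => by
    rw [hSdef]
    exact le_ciSup (f := fun y : Y => W1 ℓ (((p.map Prod.swap).condKernel y).map f)
      (((q.map Prod.swap).condKernel y).map f)) (Set.Finite.bddAbove (Set.finite_range _)) a
  have hRp0 : 0 ≤ risk ℓ f p := integral_nonneg fun z => hnn _
  have hRpS : risk ℓ f p + S < κ := hCC
  -- the off-diagonal mass of γy
  set t : ℝ := ∑ ab ∈ Finset.univ.filter (fun ab : Y × Y => ¬ ab.1 = ab.2), (γy {ab}).toReal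
    with htdef
  have ht0 : 0 ≤ t := Finset.sum_nonneg fun _ _ => ENNReal.toReal_nonneg
  have hγyint : ∫ z, ℓ z ∂γy < δ := by rw [hγyopt]; exact hshift
  have htl : l * t ≤ δ := by
    have h1 : ∫ z, ℓ z ∂γy = ∑ z : Y × Y, (γy {z}).toReal * ℓ z := by
      rw [integral_fintype Integrable.of_finite]
      simp [smul_eq_mul, measureReal_def]
    have h2 : l * t ≤ ∑ z : Y × Y, (γy {z}).toReal * ℓ z := by
      rw [htdef, Finset.mul_sum]
      refine le_trans (Finset.sum_le_sum ?_)
        (Finset.sum_le_sum_of_subset_of_nonneg (Finset.filter_subset _ _) ?_)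
      · intro ab hab
        simp only [Finset.mem_filter] at hab
        rw [mul_comm]
        exact mul_le_mul_of_nonneg_left (le_of_lt (hlow _ _ hab.2)) ENNReal.toReal_nonneg
      · intro ab _ _
        exact mul_nonneg ENNReal.toReal_nonneg (hnn _)
    linarith [h1 ▸ h2]
  -- marginals of γy on singletons
  have hPyγ : ∀ a : Y, (p.map Prod.snd) {a} = ∑ b, γy {(a, b)} := fun a => by
    rw [← hγy.1, map_fst_singleton]
  have hQyγ : ∀ b : Y, (q.map Prod.snd) {b} = ∑ a, γy {(a, b)} := fun b => by
    rw [← hγy.2, map_snd_singleton]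
  -- pointwise properties of rpost
  have hrp0 : ∀ a, 0 ≤ rpost ℓ f p a := fun a => integral_nonneg fun _ => hnn _
  have hrpL : ∀ a, rpost ℓ f p a ≤ L := fun a => by
    haveI := hμmP a
    exact integral_le_const Integrable.of_finite fun yh => hbound _ _
  -- Kantorovich: rpost for q is within S of rpost for p
  have hrq : ∀ b : Y, rpost ℓ f q b ≤ rpost ℓ f p b + S := by
    intro b
    haveI := hμmP b; haveI := hνmP b
    have key : rpost ℓ f q b - rpost ℓ f p b ≤ W1 ℓ (((p.map Prod.swap).condKernel b).map f)
        (((q.map Prod.swap).condKernel b).map f) := by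
      refine le_W1 fun γ' hγ' => ?_
      haveI := hγ'.prob
      have h1 : rpost ℓ f q b = ∫ z : Y × Y, ℓ (z.2, b) ∂γ' := by
        rw [rpost, ← hγ'.2,
          integral_map measurable_snd.aemeasurable (measurable_of_countable _).aestronglyMeasurable]
      have h2 : rpost ℓ f p b = ∫ z : Y × Y, ℓ (z.1, b) ∂γ' := by
        rw [rpost, ← hγ'.1,
          integral_map measurable_fst.aemeasurable (measurable_of_countable _).aestronglyMeasurable]
      rw [h1, h2, ← integral_sub Integrable.of_finite Integrable.of_finite]
      refine integral_mono Integrable.of_finite Integrable.of_finite fun z => ?_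
      have h3 := htri z.2 z.1 b
      have h4 := hsymm z.2 z.1
      simp only
      linarith
    have hle := hleS b
    linarith
  -- risk identities as sums over γy
  have hRp_eq : risk ℓ f p = ∑ ab : Y × Y, (γy {ab}).toReal * rpost ℓ f p ab.1 := by
    rw [risk_eq_sum p f hf ℓ hℓmeas L hnrm, Fintype.sum_prod_type]
    refine Finset.sum_congr rfl fun a _ => ?_
    rw [hPyγ a, ENNReal.toReal_sum (fun b _ => measure_ne_top _ _), Finset.sum_mul]
  have hRq_eq : risk ℓ f q = ∑ ab : Y × Y, (γy {ab}).toReal * rpost ℓ f q ab.2 := by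
    rw [risk_eq_sum q f hf ℓ hℓmeas L hnrm, Fintype.sum_prod_type_right]
    refine Finset.sum_congr rfl fun b _ => ?_
    rw [hQyγ b, ENNReal.toReal_sum (fun a _ => measure_ne_top _ _), Finset.sum_mul]
  have hwsum : ∑ ab : Y × Y, (γy {ab}).toReal = 1 := sum_toReal_eq_one γy
  -- step B : risk of q is controlled
  have hB : risk ℓ f q ≤ risk ℓ f p + S + L * t := by
    rw [hRq_eq, hRp_eq]
    have step1 : ∑ ab : Y × Y, (γy {ab}).toReal * rpost ℓ f q ab.2
        ≤ ∑ ab : Y × Y, (γy {ab}).toReal * (rpost ℓ f p ab.2 + S) :=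
      Finset.sum_le_sum fun ab _ =>
        mul_le_mul_of_nonneg_left (hrq ab.2) ENNReal.toReal_nonneg
    have step2 : ∑ ab : Y × Y, (γy {ab}).toReal * (rpost ℓ f p ab.2 + S)
        = (∑ ab : Y × Y, (γy {ab}).toReal * rpost ℓ f p ab.2) + S := by
      simp_rw [mul_add]
      rw [Finset.sum_add_distrib, ← Finset.sum_mul, hwsum, one_mul]
    have step3 : ∑ ab : Y × Y, (γy {ab}).toReal * rpost ℓ f p ab.2
        ≤ (∑ ab : Y × Y, (γy {ab}).toReal * rpost ℓ f p ab.1) + L * t := by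
      have hsub : ∑ ab : Y × Y, (γy {ab}).toReal * rpost ℓ f p ab.2
          - ∑ ab : Y × Y, (γy {ab}).toReal * rpost ℓ f p ab.1
          = ∑ ab : Y × Y, (γy {ab}).toReal * (rpost ℓ f p ab.2 - rpost ℓ f p ab.1) := by
        rw [← Finset.sum_sub_distrib]
        simp_rw [mul_sub]
      have hbnd : ∑ ab : Y × Y, (γy {ab}).toReal * (rpost ℓ f p ab.2 - rpost ℓ f p ab.1)
          ≤ L * t := by
        rw [htdef, Finset.mul_sum,
          ← Finset.sum_filter_add_sum_filter_not Finset.univ (fun ab : Y × Y => ¬ ab.1 = ab.2)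
            (fun ab : Y × Y => (γy {ab}).toReal * (rpost ℓ f p ab.2 - rpost ℓ f p ab.1))]
        have hzero : ∑ ab ∈ Finset.univ.filter (fun ab : Y × Y => ¬¬ ab.1 = ab.2),
            (γy {ab}).toReal * (rpost ℓ f p ab.2 - rpost ℓ f p ab.1) = 0 := by
          refine Finset.sum_eq_zero fun ab hab => ?_
          simp only [Finset.mem_filter, not_not] at hab
          rw [← hab.2, sub_self, mul_zero]
        rw [hzero, add_zero]
        refine Finset.sum_le_sum fun ab hab => ?_
        rw [mul_comm L _]
        refine mul_le_mul_of_nonneg_left ?_ ENNReal.toReal_nonneg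
        have := hrpL ab.2
        have := hrp0 ab.1
        linarith
      linarith
    linarith
  -- step A : Wasserstein between pushforward marginals
  have hW : W1 ℓ (p.map (fun z : X × Y => f z.1)) (q.map (fun z : X × Y => f z.1))
      ≤ S + L * t := by
    refine le_of_forall_pos_le_add fun ε hε => ?_
    have hch : ∀ a : Y, ∃ γ' : Measure (Y × Y),
        IsCoupling γ' (((p.map Prod.swap).condKernel a).map f)
          (((q.map Prod.swap).condKernel a).map f) ∧
        ∫ z, ℓ z ∂γ' < W1 ℓ (((p.map Prod.swap).condKernel a).map f)
          (((q.map Prod.swap).condKernel a).map f) + ε := fun a => by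
      haveI := hμmP a; haveI := hνmP a
      exact exists_coupling_lt ℓ _ _ hε
    choose β hβc hβlt using hch
    have hβS : ∀ a, ∫ z, ℓ z ∂(β a) ≤ S + ε := fun a =>
      le_of_lt (lt_of_lt_of_le (hβlt a) (add_le_add_left (hleS a) ε))
    set B : Y × Y → Measure (Y × Y) := fun ab =>
      if ab.1 = ab.2 then β ab.1
      else (((p.map Prod.swap).condKernel ab.1).map f).prod
        (((q.map Prod.swap).condKernel ab.2).map f) with hBdef
    have hBc : ∀ ab : Y × Y, IsCoupling (B ab) (((p.map Prod.swap).condKernel ab.1).map f)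
        (((q.map Prod.swap).condKernel ab.2).map f) := by
      rintro ⟨a, b⟩
      by_cases h : a = b
      · subst h
        simpa [hBdef] using hβc a
      · haveI := hμmP a; haveI := hνmP b
        simpa [hBdef, h] using isCoupling_prod _ _
    have hBP : ∀ ab : Y × Y, IsProbabilityMeasure (B ab) := fun ab => by
      haveI := hμmP ab.1
      exact (hBc ab).prob
    have hBcost : ∀ ab : Y × Y, ∫ z, ℓ z ∂(B ab) ≤ if ab.1 = ab.2 then S + ε else L := by
      rintro ⟨a, b⟩
      by_cases h : a = b
      · simp only [hBdef, h, if_true]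
        exact hβS b
      · simp only [hBdef, h, if_false]
        haveI := hμmP a; haveI := hνmP b
        exact integral_le_const Integrable.of_finite fun z => hbound _ _
    set γA : Measure (Y × Y) := ∑ ab : Y × Y, γy {ab} • B ab with hγAdef
    have hfin : ∀ ab : Y × Y, IsFiniteMeasure (γy {ab} • B ab) := fun ab => by
      haveI := hBP ab
      constructor
      rw [Measure.smul_apply, smul_eq_mul]
      exact ENNReal.mul_lt_top (measure_lt_top _ _) (measure_lt_top _ _)
    have hγAs : ∀ z : Y × Y, γA {z} = ∑ ab : Y × Y, γy {ab} * B ab {z} := fun z => by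
      rw [hγAdef, Measure.finset_sum_apply]
      simp [Measure.smul_apply, smul_eq_mul]
    have hγAc : IsCoupling γA (p.map (fun z : X × Y => f z.1))
        (q.map (fun z : X × Y => f z.1)) := by
      constructor
      · refine measure_ext_singleton fun yh => ?_
        rw [map_fst_singleton]
        calc ∑ b', γA {(yh, b')} = ∑ b', ∑ ab : Y × Y, γy {ab} * B ab {(yh, b')} := by
              simp_rw [hγAs]
          _ = ∑ ab : Y × Y, ∑ b', γy {ab} * B ab {(yh, b')} := Finset.sum_comm
          _ = ∑ ab : Y × Y, γy {ab} * ∑ b', B ab {(yh, b')} := by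
              simp_rw [Finset.mul_sum]
          _ = ∑ ab : Y × Y, γy {ab} * (((p.map Prod.swap).condKernel ab.1).map f) {yh} := by
              refine Finset.sum_congr rfl fun ab _ => ?_
              rw [← (hBc ab).1, map_fst_singleton]
          _ = ∑ a, (∑ b, γy {(a, b)}) * (((p.map Prod.swap).condKernel a).map f) {yh} := by
              rw [Fintype.sum_prod_type]
              dsimp only
              refine Finset.sum_congr rfl fun a _ => ?_
              rw [← Finset.sum_mul]
          _ = ∑ a, (p.map Prod.snd) {a} * (((p.map Prod.swap).condKernel a).map f) {yh} := by
              simp_rw [hPyγ]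
          _ = (p.map (fun z : X × Y => f z.1)) {yh} := (pushforward_singleton p f hf yh).symm
      · refine measure_ext_singleton fun yh => ?_
        rw [map_snd_singleton]
        calc ∑ a', γA {(a', yh)} = ∑ a', ∑ ab : Y × Y, γy {ab} * B ab {(a', yh)} := by
              simp_rw [hγAs]
          _ = ∑ ab : Y × Y, ∑ a', γy {ab} * B ab {(a', yh)} := Finset.sum_comm
          _ = ∑ ab : Y × Y, γy {ab} * ∑ a', B ab {(a', yh)} := by
              simp_rw [Finset.mul_sum]
          _ = ∑ ab : Y × Y, γy {ab} * (((q.map Prod.swap).condKernel ab.2).map f) {yh} := by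
              refine Finset.sum_congr rfl fun ab _ => ?_
              rw [← (hBc ab).2, map_snd_singleton]
          _ = ∑ b, (∑ a, γy {(a, b)}) * (((q.map Prod.swap).condKernel b).map f) {yh} := by
              rw [Fintype.sum_prod_type_right]
              dsimp only
              refine Finset.sum_congr rfl fun b _ => ?_
              rw [← Finset.sum_mul]
          _ = ∑ b, (q.map Prod.snd) {b} * (((q.map Prod.swap).condKernel b).map f) {yh} := by
              simp_rw [hQyγ]
          _ = (q.map (fun z : X × Y => f z.1)) {yh} := (pushforward_singleton q f hf yh).symm
    refine le_trans (W1_le hnn hγAc) ?_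
    have hintA : ∫ z, ℓ z ∂γA = ∑ ab : Y × Y, (γy {ab}).toReal * ∫ z, ℓ z ∂(B ab) := by
      rw [hγAdef, integral_finset_sum_measure fun ab _ => haveI := hfin ab; Integrable.of_finite]
      simp_rw [integral_smul_measure, smul_eq_mul]
    rw [hintA]
    have hstep : ∑ ab : Y × Y, (γy {ab}).toReal * ∫ z, ℓ z ∂(B ab)
        ≤ ∑ ab : Y × Y, (γy {ab}).toReal * (if ab.1 = ab.2 then S + ε else L) :=
      Finset.sum_le_sum fun ab _ =>
        mul_le_mul_of_nonneg_left (hBcost ab) ENNReal.toReal_nonneg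
    refine le_trans hstep ?_
    rw [← Finset.sum_filter_add_sum_filter_not Finset.univ (fun ab : Y × Y => ¬ ab.1 = ab.2)
      (fun ab : Y × Y => (γy {ab}).toReal * (if ab.1 = ab.2 then S + ε else L))]
    have hoff : ∑ ab ∈ Finset.univ.filter (fun ab : Y × Y => ¬ ab.1 = ab.2),
        (γy {ab}).toReal * (if ab.1 = ab.2 then S + ε else L) = L * t := by
      rw [htdef, Finset.mul_sum]
      refine Finset.sum_congr rfl fun ab hab => ?_
      simp only [Finset.mem_filter] at hab
      rw [if_neg hab.2, mul_comm]
    have hdiag : ∑ ab ∈ Finset.univ.filter (fun ab : Y × Y => ¬¬ ab.1 = ab.2),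
        (γy {ab}).toReal * (if ab.1 = ab.2 then S + ε else L) ≤ S + ε := by
      have e1 : ∀ ab ∈ Finset.univ.filter (fun ab : Y × Y => ¬¬ ab.1 = ab.2),
          (γy {ab}).toReal * (if ab.1 = ab.2 then S + ε else L)
            = (γy {ab}).toReal * (S + ε) := by
        intro ab hab
        simp only [Finset.mem_filter, not_not] at hab
        rw [if_pos hab.2]
      rw [Finset.sum_congr rfl e1, ← Finset.sum_mul]
      calc (∑ ab ∈ Finset.univ.filter (fun ab : Y × Y => ¬¬ ab.1 = ab.2), (γy {ab}).toReal)
            * (S + ε)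
          ≤ 1 * (S + ε) := by
            refine mul_le_mul_of_nonneg_right ?_ (by linarith)
            rw [← hwsum]
            exact Finset.sum_le_sum_of_subset_of_nonneg (Finset.filter_subset _ _)
              fun _ _ _ => ENNReal.toReal_nonneg
        _ = S + ε := one_mul _
    rw [hoff]
    linarith
  -- disintegration of jmap risks
  have hjfstp : (jmap f p).map Prod.fst = p.map (fun z : X × Y => f z.1) := by
    rw [jmap, Measure.map_map measurable_fst hjm]
    rfl
  have hjfstq : (jmap f q).map Prod.fst = q.map (fun z : X × Y => f z.1) := by
    rw [jmap, Measure.map_map measurable_fst hjm]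
    rfl
  have hgp : ∫ a, (∫ y, ℓ (y, a) ∂((jmap f p).condKernel a)) ∂(p.map (fun z : X × Y => f z.1))
      = risk ℓ f p := by
    rw [← hjfstp]
    have := Measure.integral_condKernel (ρ := jmap f p) (f := fun z : Y × Y => ℓ (z.2, z.1))
      Integrable.of_finite
    rw [Measure.fst] at this
    have hsw : Measurable (fun z : Y × Y => ℓ (z.2, z.1)) := measurable_of_countable _
    rw [this, jmap, integral_map hjm.aemeasurable hsw.aestronglyMeasurable]
    simp only
    have e : ∀ z : X × Y, ℓ (z.2, f z.1) = ℓ (f z.1, z.2) := fun z => hsymm _ _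
    simp_rw [e]
    rfl
  have hgq : ∫ b, (∫ y, ℓ (b, y) ∂((jmap f q).condKernel b)) ∂(q.map (fun z : X × Y => f z.1))
      = risk ℓ f q := by
    rw [← hjfstq]
    have := Measure.integral_condKernel (ρ := jmap f q) (f := ℓ) Integrable.of_finite
    rw [Measure.fst] at this
    rw [this, jmap, integral_map hjm.aemeasurable hℓmeas.aestronglyMeasurable]
    rfl
  -- pointwise bound on entanglement integrand
  have hEpt : ∀ z : Y × Y, W1 ℓ ((jmap f p).condKernel z.1) ((jmap f q).condKernel z.2)
      ≤ (∫ y, ℓ (y, z.1) ∂((jmap f p).condKernel z.1)) + ℓ z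
        + ∫ y, ℓ (z.2, y) ∂((jmap f q).condKernel z.2) := by
    intro z
    refine le_trans (W1_le hnn (isCoupling_prod ((jmap f p).condKernel z.1)
      ((jmap f q).condKernel z.2))) ?_
    have hmono : ∫ u, ℓ u ∂(((jmap f p).condKernel z.1).prod ((jmap f q).condKernel z.2))
        ≤ ∫ u : Y × Y, (ℓ (u.1, z.1) + ℓ z + ℓ (z.2, u.2))
            ∂(((jmap f p).condKernel z.1).prod ((jmap f q).condKernel z.2)) := by
      refine integral_mono Integrable.of_finite Integrable.of_finite fun u => ?_
      have h1 := htri u.1 z.1 u.2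
      have h2 := htri z.1 z.2 u.2
      have h3 := hsymm u.1 z.1
      simp only
      linarith
    refine le_trans hmono ?_
    rw [integral_add Integrable.of_finite Integrable.of_finite,
      integral_add Integrable.of_finite Integrable.of_finite, integral_const, probReal_univ,
      one_smul]
    have m1 : ∫ u : Y × Y, ℓ (u.1, z.1)
          ∂(((jmap f p).condKernel z.1).prod ((jmap f q).condKernel z.2))
        = ∫ y, ℓ (y, z.1) ∂((jmap f p).condKernel z.1) := by
      rw [← integral_map measurable_fst.aemeasurable
        (measurable_of_countable (fun y : Y => ℓ (y, z.1))).aestronglyMeasurable,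
        Measure.map_fst_prod, measure_univ, one_smul]
    have m2 : ∫ u : Y × Y, ℓ (z.2, u.2)
          ∂(((jmap f p).condKernel z.1).prod ((jmap f q).condKernel z.2))
        = ∫ y, ℓ (z.2, y) ∂((jmap f q).condKernel z.2) := by
      rw [← integral_map measurable_snd.aemeasurable
        (measurable_of_countable (fun y : Y => ℓ (z.2, y))).aestronglyMeasurable,
        Measure.map_snd_prod, measure_univ, one_smul]
    rw [m1, m2]
  -- entanglement bound
  have hE : ∫ z, W1 ℓ ((jmap f p).condKernel z.1) ((jmap f q).condKernel z.2) ∂γf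
      ≤ risk ℓ f p + (∫ z, ℓ z ∂γf) + risk ℓ f q := by
    refine le_trans (integral_mono Integrable.of_finite Integrable.of_finite hEpt) ?_
    rw [integral_add Integrable.of_finite Integrable.of_finite,
      integral_add Integrable.of_finite Integrable.of_finite]
    have marg1 : ∫ z : Y × Y, (∫ y, ℓ (y, z.1) ∂((jmap f p).condKernel z.1)) ∂γf
        = risk ℓ f p := by
      have h := integral_map (φ := Prod.fst) (μ := γf) measurable_fst.aemeasurable
        (f := fun a : Y => ∫ y, ℓ (y, a) ∂((jmap f p).condKernel a))
        (measurable_of_countable _).aestronglyMeasurable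
      rw [hγf.1] at h
      rw [← h, hgp]
    have marg2 : ∫ z : Y × Y, (∫ y, ℓ (z.2, y) ∂((jmap f q).condKernel z.2)) ∂γf
        = risk ℓ f q := by
      have h := integral_map (φ := Prod.snd) (μ := γf) measurable_snd.aemeasurable
        (f := fun b : Y => ∫ y, ℓ (b, y) ∂((jmap f q).condKernel b))
        (measurable_of_countable _).aestronglyMeasurable
      rw [hγf.2] at h
      rw [← h, hgq]
    rw [marg1, marg2]
  rw [hγfopt] at hE
  have hRq0 : 0 ≤ risk ℓ f q := integral_nonneg fun z => hnn _
  have hLt : L * t ≤ (L + l) / l * δ := by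
    rw [div_mul_eq_mul_div, le_div_iff₀ hl]
    nlinarith [mul_le_mul_of_nonneg_left htl hL.le]
  linarith [hE, hW, hB, hRpS, hRp0, hS0, hLt]
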